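/- arXiv:1902.07824 — 2 statements merged into one kernel-verified Lean document; each statement's English description precedes it below -/
import Mathlib

section
/- Let α, β ∈ (0,1] with α + β > 1, and let u, v : [0,1] → ℝ be Hölder continuous of exponents α and β respectively, i.e., |u(s)−u(t)| ≤ H_α(u)·|s−t|^α and |v(s)−v(t)| ≤ H_β(v)·|s−t|^β for all s,t ∈ [0,1]. Then for every 0 ≤ s ≤ t ≤ 1 and every finite partition s = t₀ < t₁ < … < t_m = t of [s,t], | Σ_{i=0}^{m−1} v(t_i)·(u(t_{i+1}) − u(t_i)) − v(s)·(u(t) − u(s)) | ≤ K(α+β)·H_α(u)·H_β(v)·|t−s|^{α+β}, where K(γ) = 1 + Σ_{n=1}^{∞} n^{−γ}. -/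
lemma young_pair (α β : ℝ) (hα0 : 0 < α) (hβ0 : 0 < β) (k : ℕ) (hk : 1 ≤ k)
    (a : ℕ → ℝ) (ha : ∀ j, j ≤ k → 0 < a j) :
    ∃ i, i < k ∧ a i ^ β * a (i + 1) ^ α ≤
      ((∑ j ∈ Finset.range (k + 1), a j) / k) ^ (α + β) := by
  by_contra hcon
  push_neg at hcon
  have hγ : 0 < α + β := by linarith
  set L := ∑ j ∈ Finset.range (k + 1), a j with hLdef
  have hL0 : 0 < L := Finset.sum_pos
    (fun j hj => ha j (Nat.lt_succ_iff.mp (Finset.mem_range.mp hj))) ⟨0, by simp⟩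
  have hk0 : (0:ℝ) < k := by exact_mod_cast hk
  have hLk : 0 < L / k := div_pos hL0 hk0
  have key : ∀ i ∈ Finset.range k, (α + β) * (L / k) < β * a i + α * a (i + 1) := by
    intro i hi
    have hi' := Finset.mem_range.mp hi
    have h1 := hcon i hi'
    have hai : 0 < a i := ha i (by omega)
    have hai1 : 0 < a (i + 1) := ha (i + 1) (by omega)
    have h2 : L / k < a i ^ (β / (α + β)) * a (i + 1) ^ (α / (α + β)) := by
      have h3 := Real.rpow_lt_rpow (Real.rpow_nonneg hLk.le _) h1
        (by positivity : (0:ℝ) < (α + β)⁻¹)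
      rw [← Real.rpow_mul hLk.le, mul_inv_cancel₀ hγ.ne', Real.rpow_one,
        Real.mul_rpow (by positivity) (by positivity),
        ← Real.rpow_mul hai.le, ← Real.rpow_mul hai1.le] at h3
      rw [div_eq_mul_inv, div_eq_mul_inv]
      exact h3
    have h4 : a i ^ (β / (α + β)) * a (i + 1) ^ (α / (α + β)) ≤
        (β / (α + β)) * a i + (α / (α + β)) * a (i + 1) :=
      Real.geom_mean_le_arith_mean2_weighted (by positivity) (by positivity)
        hai.le hai1.le (by rw [← add_div, add_comm, div_self hγ.ne'])
    have h5 : L / k < (β / (α + β)) * a i + (α / (α + β)) * a (i + 1) := lt_of_lt_of_le h2 h4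
    have := mul_lt_mul_of_pos_left h5 hγ
    calc (α + β) * (L / k) < (α + β) * ((β / (α + β)) * a i + (α / (α + β)) * a (i + 1)) := this
      _ = β * a i + α * a (i + 1) := by field_simp
  have hsum := Finset.sum_lt_sum_of_nonempty ⟨0, Finset.mem_range.mpr (by omega)⟩ key
  have e0 : ∑ _i ∈ Finset.range k, (α + β) * (L / k) = (α + β) * L := by
    rw [Finset.sum_const, Finset.card_range, nsmul_eq_mul]
    field_simp
  have e1 : ∑ i ∈ Finset.range k, a i = L - a k := by
    rw [hLdef, Finset.sum_range_succ]; ring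
  have e2 : ∑ i ∈ Finset.range k, a (i + 1) = L - a 0 := by
    rw [hLdef, Finset.sum_range_succ']; ring
  rw [e0, Finset.sum_add_distrib, ← Finset.mul_sum, ← Finset.mul_sum, e1, e2] at hsum
  nlinarith [mul_pos hβ0 (ha k le_rfl), mul_pos hα0 (ha 0 (by omega))]


lemma young_main (α β : ℝ) (hα0 : 0 < α) (hβ0 : 0 < β) (hαβ : 1 < α + β)
    (u v : ℝ → ℝ) (Hu Hv : ℝ) (hHu : 0 ≤ Hu) (hHv : 0 ≤ Hv)
    (hu : ∀ s t : ℝ, s ∈ Set.Icc (0:ℝ) 1 → t ∈ Set.Icc (0:ℝ) 1 →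
      |u s - u t| ≤ Hu * |s - t| ^ α)
    (hv : ∀ s t : ℝ, s ∈ Set.Icc (0:ℝ) 1 → t ∈ Set.Icc (0:ℝ) 1 →
      |v s - v t| ≤ Hv * |s - t| ^ β)
    (s t : ℝ) (hs : 0 ≤ s) (ht : t ≤ 1) :
    ∀ m : ℕ, ∀ p : ℕ → ℝ, p 0 = s → p m = t → (∀ i : ℕ, i < m → p i < p (i + 1)) →
    |∑ i ∈ Finset.range m, v (p i) * (u (p (i + 1)) - u (p i)) - v s * (u t - u s)| ≤
      Hu * Hv * (t - s) ^ (α + β) * ∑ j ∈ Finset.range (m - 1), ((j:ℝ) + 1) ^ (-(α + β)) := by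
  intro m
  induction m with
  | zero =>
    intro p hp0 hpm _
    have hts : t = s := by rw [← hp0, ← hpm]
    simp [hts]
  | succ m ih =>
    intro p hp0 hpm hmono
    rcases Nat.eq_zero_or_pos m with hm | hm
    · subst hm
      have h1 : p 1 = t := hpm
      simp [Finset.sum_range_one, hp0, h1]
    -- m ≥ 1 : at least two intervals
    have hle : ∀ j l : ℕ, j ≤ l → l ≤ m + 1 → p j ≤ p l := by
      intro j l hjl
      induction l with
      | zero =>
        intro _
        have h0 : j = 0 := by omega
        exact le_of_eq (congrArg p h0)
      | succ l ihl =>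
        intro hl
        rcases Nat.lt_or_ge j (l + 1) with h | h
        · exact le_trans (ihl (by omega) (by omega)) (le_of_lt (hmono l (by omega)))
        · have : j = l + 1 := by omega
          exact le_of_eq (congrArg p this)
    have hmem : ∀ j, j ≤ m + 1 → p j ∈ Set.Icc (0:ℝ) 1 := by
      intro j hj
      constructor
      · calc (0:ℝ) ≤ s := hs
          _ = p 0 := hp0.symm
          _ ≤ p j := hle 0 j (by omega) hj
      · calc p j ≤ p (m + 1) := hle j (m + 1) hj le_rfl
          _ = t := hpm
          _ ≤ 1 := ht
    have hstlt : s < t := by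
      rw [← hp0, ← hpm]; exact lt_of_le_of_lt (hle 0 m (by omega) (by omega)) (hmono m (by omega))
    set a : ℕ → ℝ := fun j => p (j + 1) - p j with hadef
    have ha : ∀ j, j ≤ m → 0 < a j := fun j hj => sub_pos.mpr (hmono j (by omega))
    have hsum_a : ∑ j ∈ Finset.range (m + 1), a j = t - s := by
      rw [hadef]
      rw [Finset.sum_range_sub p (m + 1), hp0, hpm]
    obtain ⟨i, hi, hYoung⟩ := young_pair α β hα0 hβ0 m hm a ha
    rw [hsum_a] at hYoung
    set q : ℕ → ℝ := fun j => if j ≤ i then p j else p (j + 1) with hqdef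
    have hq1 : ∀ j, j ≤ i → q j = p j := fun j hj => by simp [hqdef, hj]
    have hq2 : ∀ j, i < j → q j = p (j + 1) := fun j hj => by
      simp [hqdef, Nat.not_le.mpr hj]
    have hq0 : q 0 = s := by rw [hq1 0 (by omega), hp0]
    have hqm : q m = t := by rw [hq2 m hi, hpm]
    have hqmono : ∀ j : ℕ, j < m → q j < q (j + 1) := by
      intro j hj
      rcases Nat.lt_or_ge j i with h | h
      · rw [hq1 j (by omega), hq1 (j + 1) (by omega)]
        exact hmono j (by omega)
      rcases Nat.eq_or_lt_of_le h with h' | h'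
      · rw [hq1 j (by omega), hq2 (j + 1) (by omega)]
        exact lt_trans (hmono j (by omega)) (hmono (j + 1) (by omega))
      · rw [hq2 j (by omega), hq2 (j + 1) (by omega)]
        exact hmono (j + 1) (by omega)
    have hSq := ih q hq0 hqm hqmono
    set tp : ℕ → ℝ := fun j => v (p j) * (u (p (j + 1)) - u (p j)) with htpdef
    set tq : ℕ → ℝ := fun j => v (q j) * (u (q (j + 1)) - u (q j)) with htqdef
    set r : ℕ := m - 1 - i with hrdef
    -- decompose the p-sum
    have dp : ∑ j ∈ Finset.range (m + 1), tp j =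
        ∑ j ∈ Finset.range i, tp j +
          ((∑ j ∈ Finset.range r, tp (i + (j + 1 + 1)) + tp (i + 1)) + tp i) := by
      have h1 := Finset.sum_range_add tp i (r + 2)
      rw [show i + (r + 2) = m + 1 by omega] at h1
      rw [h1, Finset.sum_range_succ' (fun j => tp (i + j)) (r + 1),
        Finset.sum_range_succ' (fun j => tp (i + (j + 1))) r]
      norm_num
    have dq : ∑ j ∈ Finset.range m, tq j =
        ∑ j ∈ Finset.range i, tq j +
          (∑ j ∈ Finset.range r, tq (i + (j + 1)) + tq i) := by
      have h1 := Finset.sum_range_add tq i (r + 1)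
      rw [show i + (r + 1) = m by omega] at h1
      rw [h1, Finset.sum_range_succ' (fun j => tq (i + j)) r]
      norm_num
    have eq1 : ∑ j ∈ Finset.range i, tq j = ∑ j ∈ Finset.range i, tp j := by
      refine Finset.sum_congr rfl fun j hj => ?_
      have hj' := Finset.mem_range.mp hj
      rw [htqdef, htpdef]
      simp only
      rw [hq1 j (by omega), hq1 (j + 1) (by omega)]
    have eq2 : ∑ j ∈ Finset.range r, tq (i + (j + 1)) =
        ∑ j ∈ Finset.range r, tp (i + (j + 1 + 1)) := by
      refine Finset.sum_congr rfl fun j hj => ?_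
      rw [htqdef, htpdef]
      simp only
      rw [hq2 (i + (j + 1)) (by omega), hq2 (i + (j + 1) + 1) (by omega)]
      congr 3 <;> omega
    have eqtq : tq i = v (p i) * (u (p (i + 1 + 1)) - u (p i)) := by
      rw [htqdef]
      simp only
      rw [hq1 i le_rfl, hq2 (i + 1) (by omega)]
    have hdiff : ∑ j ∈ Finset.range (m + 1), tp j - ∑ j ∈ Finset.range m, tq j =
        (v (p (i + 1)) - v (p i)) * (u (p (i + 1 + 1)) - u (p (i + 1))) := by
      rw [dp, dq, eq1, eq2, eqtq, htpdef]
      simp only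
      ring
    have haipos : 0 < a i := ha i hi.le
    have hai1pos : 0 < a (i + 1) := ha (i + 1) hi
    have habs1 : |v (p (i + 1)) - v (p i)| ≤ Hv * a i ^ β := by
      have h := hv (p (i + 1)) (p i) (hmem _ (by omega)) (hmem _ (by omega))
      have e : |p (i + 1) - p i| = a i := by
        rw [hadef]
        exact abs_of_pos (sub_pos.mpr (hmono i (by omega)))
      rwa [e] at h
    have habs2 : |u (p (i + 1 + 1)) - u (p (i + 1))| ≤ Hu * a (i + 1) ^ α := by
      have h := hu (p (i + 1 + 1)) (p (i + 1)) (hmem _ (by omega)) (hmem _ (by omega))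
      have e : |p (i + 1 + 1) - p (i + 1)| = a (i + 1) := by
        rw [hadef]
        exact abs_of_pos (sub_pos.mpr (hmono (i + 1) (by omega)))
      rwa [e] at h
    have hprod : |(v (p (i + 1)) - v (p i)) * (u (p (i + 1 + 1)) - u (p (i + 1)))| ≤
        Hu * Hv * ((t - s) / m) ^ (α + β) := by
      rw [abs_mul]
      calc |v (p (i + 1)) - v (p i)| * |u (p (i + 1 + 1)) - u (p (i + 1))|
          ≤ (Hv * a i ^ β) * (Hu * a (i + 1) ^ α) :=
            mul_le_mul habs1 habs2 (abs_nonneg _)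
              (mul_nonneg hHv (Real.rpow_nonneg haipos.le _))
        _ = Hu * Hv * (a i ^ β * a (i + 1) ^ α) := by ring
        _ ≤ Hu * Hv * ((t - s) / m) ^ (α + β) :=
            mul_le_mul_of_nonneg_left hYoung (mul_nonneg hHu hHv)
    have hdivpow : ((t - s) / m) ^ (α + β) = (t - s) ^ (α + β) * (m:ℝ) ^ (-(α + β)) := by
      rw [Real.div_rpow (by linarith) (Nat.cast_nonneg m), Real.rpow_neg (Nat.cast_nonneg m),
        div_eq_mul_inv]
    have hsplitsum : ∑ j ∈ Finset.range m, ((j:ℝ) + 1) ^ (-(α + β)) =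
        ∑ j ∈ Finset.range (m - 1), ((j:ℝ) + 1) ^ (-(α + β)) + (m:ℝ) ^ (-(α + β)) := by
      conv_lhs => rw [show m = (m - 1) + 1 by omega]
      rw [Finset.sum_range_succ]
      congr 2
      rw [Nat.cast_sub (by omega : 1 ≤ m)]
      push_cast
      ring
    have key1 : |∑ j ∈ Finset.range (m + 1), tp j - v s * (u t - u s)| ≤
        Hu * Hv * (t - s) ^ (α + β) * ∑ j ∈ Finset.range m, ((j:ℝ) + 1) ^ (-(α + β)) := by
      calc |∑ j ∈ Finset.range (m + 1), tp j - v s * (u t - u s)|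
          ≤ |∑ j ∈ Finset.range (m + 1), tp j - ∑ j ∈ Finset.range m, tq j| +
            |∑ j ∈ Finset.range m, tq j - v s * (u t - u s)| := abs_sub_le _ _ _
        _ ≤ Hu * Hv * ((t - s) / m) ^ (α + β) +
            Hu * Hv * (t - s) ^ (α + β) * ∑ j ∈ Finset.range (m - 1), ((j:ℝ) + 1) ^ (-(α + β)) := by
            refine add_le_add ?_ hSq
            rw [hdiff]
            exact hprod
        _ = Hu * Hv * (t - s) ^ (α + β) *
            (∑ j ∈ Finset.range (m - 1), ((j:ℝ) + 1) ^ (-(α + β)) + (m:ℝ) ^ (-(α + β))) := by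
            rw [hdivpow]; ring
        _ = Hu * Hv * (t - s) ^ (α + β) * ∑ j ∈ Finset.range m, ((j:ℝ) + 1) ^ (-(α + β)) := by
            rw [hsplitsum]
    have hrange : (m + 1) - 1 = m := by omega
    rw [hrange]
    have : ∑ i ∈ Finset.range (m + 1), v (p i) * (u (p (i + 1)) - u (p i)) =
        ∑ j ∈ Finset.range (m + 1), tp j := by
      refine Finset.sum_congr rfl fun j _ => ?_
      rw [htpdef]
    rw [this]
    exact key1



/-- Young–Lóeve estimate (discrete Riemann-sum form): if `u` is `α`-Hölder and `v` is
`β`-Hölder on `[0,1]` with `α + β > 1`, then for every partition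
`s = p₀ < p₁ < … < p_m = t` of `[s,t] ⊆ [0,1]`,
`|Σ_{i<m} v(p_i)(u(p_{i+1}) − u(p_i)) − v(s)(u(t) − u(s))|
  ≤ K(α+β)·H_α(u)·H_β(v)·|t−s|^{α+β}` with `K(γ) = 1 + Σ_{n≥1} n^{−γ}`. -/
theorem stmt15 (α β : ℝ) (hα0 : 0 < α) (hα1 : α ≤ 1) (hβ0 : 0 < β) (hβ1 : β ≤ 1)
    (hαβ : 1 < α + β) (u v : ℝ → ℝ) (Hu Hv : ℝ)
    (hu : ∀ s t : ℝ, s ∈ Set.Icc (0:ℝ) 1 → t ∈ Set.Icc (0:ℝ) 1 →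
      |u s - u t| ≤ Hu * |s - t| ^ α)
    (hv : ∀ s t : ℝ, s ∈ Set.Icc (0:ℝ) 1 → t ∈ Set.Icc (0:ℝ) 1 →
      |v s - v t| ≤ Hv * |s - t| ^ β)
    (s t : ℝ) (hs : 0 ≤ s) (hst : s ≤ t) (ht : t ≤ 1)
    (m : ℕ) (p : ℕ → ℝ) (hp0 : p 0 = s) (hpm : p m = t)
    (hmono : ∀ i : ℕ, i < m → p i < p (i + 1)) :
    |∑ i ∈ Finset.range m, v (p i) * (u (p (i + 1)) - u (p i)) - v s * (u t - u s)| ≤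
      (1 + ∑' n : ℕ, ((n:ℝ) + 1) ^ (-(α + β))) * Hu * Hv * (t - s) ^ (α + β) := by
  have hHu : 0 ≤ Hu := by
    have h := hu 0 1 (by norm_num) (by norm_num)
    have e : |(0:ℝ) - 1| ^ α = 1 := by norm_num
    rw [e, mul_one] at h
    exact le_trans (abs_nonneg _) h
  have hHv : 0 ≤ Hv := by
    have h := hv 0 1 (by norm_num) (by norm_num)
    have e : |(0:ℝ) - 1| ^ β = 1 := by norm_num
    rw [e, mul_one] at h
    exact le_trans (abs_nonneg _) h
  have hmain := young_main α β hα0 hβ0 hαβ u v Hu Hv hHu hHv hu hv s t hs ht m p hp0 hpm hmono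
  have hsummable : Summable (fun n : ℕ => ((n:ℝ) + 1) ^ (-(α + β))) := by
    have h1 : Summable (fun n : ℕ => (n:ℝ) ^ (-(α + β))) :=
      Real.summable_nat_rpow.mpr (by linarith)
    have h2 := (summable_nat_add_iff 1).mpr h1
    simpa using h2
  have hsum_le : ∑ j ∈ Finset.range (m - 1), ((j:ℝ) + 1) ^ (-(α + β)) ≤
      ∑' n : ℕ, ((n:ℝ) + 1) ^ (-(α + β)) :=
    Summable.sum_le_tsum _ (fun n _ => Real.rpow_nonneg (by positivity) _) hsummable
  have hfac : 0 ≤ Hu * Hv * (t - s) ^ (α + β) := by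
    have : (0:ℝ) ≤ (t - s) ^ (α + β) := Real.rpow_nonneg (by linarith) _
    positivity
  calc |∑ i ∈ Finset.range m, v (p i) * (u (p (i + 1)) - u (p i)) - v s * (u t - u s)|
      ≤ Hu * Hv * (t - s) ^ (α + β) * ∑ j ∈ Finset.range (m - 1), ((j:ℝ) + 1) ^ (-(α + β)) :=
        hmain
    _ ≤ Hu * Hv * (t - s) ^ (α + β) * (1 + ∑' n : ℕ, ((n:ℝ) + 1) ^ (-(α + β))) := by
        refine mul_le_mul_of_nonneg_left ?_ hfac
        linarith
    _ = (1 + ∑' n : ℕ, ((n:ℝ) + 1) ^ (-(α + β))) * Hu * Hv * (t - s) ^ (α + β) := by ring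
end

section
/- Let B be a fractional Brownian motion with Hurst index H ∈ (1/2,1) on [0,1]. Fix α ∈ (1/2,H), δ ∈ (0,H−α), constants ν, ν* > 0, set ρ = 2(ν + ν*), and let N = sup{k ≥ 1 : max_{0 ≤ j ≤ 2^{k-1}-1} |a^k_j − b^k_j| ≥ ρ·2^{−(H−δ)k}} (N = 0 if the set is empty). Then almost surely ‖B‖_α ≤ ‖B_N‖_α + ρ·2^{2−α}·2^{−(H−α−δ)(N+1)} / (1 − 2^{−(H−α−δ)}), where B_N is the piecewise linear interpolation of B on the dyadic grid D_N. -/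
open MeasureTheory ProbabilityTheory Filter Topology
open scoped NNReal ENNReal Real

noncomputable section

/-- Covariance function of fractional Brownian motion with Hurst index `H`. -/
def fbmCov (H s t : ℝ) : ℝ := (s ^ (2 * H) + t ^ (2 * H) - |s - t| ^ (2 * H)) / 2

/-- `B` is a fractional Brownian motion with Hurst index `H` on `[0,1]` under `P`. -/
structure IsFBM {Ω : Type*} [MeasurableSpace Ω] (P : Measure Ω) (H : ℝ)
    (B : Ω → ℝ → ℝ) : Prop where
  continuousOn : ∀ ω, ContinuousOn (B ω) (Set.Icc 0 1)
  init : ∀ ω, B ω 0 = 0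
  measurable : ∀ t : ℝ, Measurable fun ω => B ω t
  gaussian : ∀ (m : ℕ) (t : Fin m → ℝ), (∀ i, t i ∈ Set.Icc (0:ℝ) 1) →
    ∀ c : Fin m → ℝ,
      Measure.map (fun ω => ∑ i, c i * B ω (t i)) P =
        gaussianReal 0 (∑ i, ∑ j, c i * c j * fbmCov H (t i) (t j)).toNNReal

/-- `max_{0 ≤ j ≤ 2^{k-1}-1} |a^k_j − b^k_j|` for the path `B`. -/
def mdGap (B : ℝ → ℝ) (k : ℕ) : ℝ :=
  (Finset.range (2 ^ (k - 1))).sup' (Finset.nonempty_range_iff.mpr (by positivity))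
    fun j => |B ((2 * (j:ℝ) + 1) / 2 ^ k) -
      (B ((j:ℝ) / 2 ^ (k - 1)) + B (((j:ℝ) + 1) / 2 ^ (k - 1))) / 2|

/-- The level of the last record-breaker. -/
def lastRB (H δ ρ : ℝ) (B : ℝ → ℝ) : ℕ :=
  sSup {k : ℕ | 1 ≤ k ∧ ρ * (2:ℝ) ^ (-(H - δ) * (k:ℝ)) ≤ mdGap B k}

/-- Piecewise linear interpolation of `f` on the dyadic grid `D_n`. -/
def dyadicInterp (n : ℕ) (f : ℝ → ℝ) (t : ℝ) : ℝ :=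
  f ((⌊t * 2 ^ n⌋ : ℝ) / 2 ^ n) +
    (t * 2 ^ n - (⌊t * 2 ^ n⌋ : ℝ)) *
      (f (((⌊t * 2 ^ n⌋ : ℝ) + 1) / 2 ^ n) - f ((⌊t * 2 ^ n⌋ : ℝ) / 2 ^ n))

/-- `α`-Hölder norm of `u` on `[0,1]`. -/
def holderNorm01 (a : ℝ) (u : ℝ → ℝ) : ℝ :=
  sSup {c : ℝ | ∃ s t : ℝ, 0 ≤ s ∧ s < t ∧ t ≤ 1 ∧ c = |u t - u s| / (t - s) ^ a}

lemma interp_cell (f : ℝ → ℝ) (n : ℕ) (i : ℕ) {t : ℝ}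
    (h1 : (i : ℝ) / 2 ^ n ≤ t) (h2 : t ≤ ((i : ℝ) + 1) / 2 ^ n) :
    dyadicInterp n f t =
      f ((i : ℝ) / 2 ^ n) + (t * 2 ^ n - (i : ℝ)) *
        (f (((i : ℝ) + 1) / 2 ^ n) - f ((i : ℝ) / 2 ^ n)) := by
  have hp : (0:ℝ) < 2 ^ n := by positivity
  rcases lt_or_eq_of_le h2 with h2' | h2'
  · have hfl : ⌊t * 2 ^ n⌋ = (i : ℤ) := by
      rw [Int.floor_eq_iff]
      push_cast
      constructor
      · calc ((i:ℕ):ℝ) = (i:ℝ)/2^n * 2^n := by field_simp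
          _ ≤ t * 2^n := by gcongr
      · calc t * 2^n < (((i:ℝ)+1)/2^n) * 2^n := by gcongr
          _ = (i:ℝ) + 1 := by field_simp
    simp [dyadicInterp, hfl]
  · have ht : t * 2 ^ n = (i : ℝ) + 1 := by
      rw [h2']; field_simp
    have hfl : ⌊t * 2 ^ n⌋ = (i : ℤ) + 1 := by
      rw [ht]; exact_mod_cast Int.floor_intCast ((i:ℤ)+1)
    rw [dyadicInterp, hfl, ht]
    push_cast
    ring

lemma interp_grid (f : ℝ → ℝ) (n : ℕ) (i : ℕ) :
    dyadicInterp n f ((i : ℝ) / 2 ^ n) = f ((i : ℝ) / 2 ^ n) := by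
  have hp : (0:ℝ) < 2 ^ n := by positivity
  have h2 : (i:ℝ)/2^n ≤ ((i:ℝ)+1)/2^n := by gcongr; linarith
  have h := interp_cell f n i (le_refl ((i:ℝ)/2^n)) h2
  rw [h]
  have : (i:ℝ)/2^n * 2^n - i = 0 := by field_simp; ring
  rw [this]; ring

lemma glue (g : ℝ → ℝ) (n : ℕ) (L : ℝ) (hL : 0 ≤ L)
    (loc : ∀ i : ℕ, i < 2 ^ n → ∀ s t : ℝ, (i : ℝ) / 2 ^ n ≤ s → s ≤ t →
      t ≤ ((i : ℝ) + 1) / 2 ^ n → |g t - g s| ≤ L * (t - s)) :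
    ∀ s t : ℝ, 0 ≤ s → s ≤ t → t ≤ 1 → |g t - g s| ≤ L * (t - s) := by
  have hp : (0:ℝ) < 2 ^ n := by positivity
  have key : ∀ d : ℕ, ∀ s t : ℝ, 0 ≤ s → s ≤ t → t ≤ 1 →
      ⌊t * 2 ^ n⌋ ≤ ⌊s * 2 ^ n⌋ + d → |g t - g s| ≤ L * (t - s) := by
    intro d
    induction d with
    | zero =>
      intro s t hs hst ht hd
      rcases eq_or_lt_of_le (le_trans hst ht) with h1 | h1
      · have : t = 1 := le_antisymm ht (h1 ▸ hst)
        rw [h1, this]; simp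
      -- s < 1, same cell
      have hi0 : 0 ≤ ⌊s * 2 ^ n⌋ := Int.floor_nonneg.mpr (by positivity)
      set i : ℕ := ⌊s * 2 ^ n⌋.toNat with hidef
      have hic : (i : ℝ) = (⌊s * 2 ^ n⌋ : ℝ) := by
        rw [hidef]; exact_mod_cast Int.toNat_of_nonneg hi0
      have hilt : i < 2 ^ n := by
        have ha : s * 2 ^ n < 2 ^ n := by nlinarith
        have h2 : (⌊s * 2 ^ n⌋ : ℝ) < ((2 ^ n : ℕ) : ℝ) := by
          push_cast; exact lt_of_le_of_lt (Int.floor_le _) ha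
        have h3 : ⌊s * 2 ^ n⌋ < ((2 ^ n : ℕ) : ℤ) := by exact_mod_cast h2
        omega
      refine loc i hilt s t ?_ hst ?_
      · rw [div_le_iff₀ hp, hic]; exact Int.floor_le _
      · rw [le_div_iff₀ hp]
        have hfl : ⌊t * 2 ^ n⌋ ≤ (i : ℤ) := by omega
        have h4 : t * 2 ^ n < (⌊t * 2 ^ n⌋ : ℝ) + 1 := Int.lt_floor_add_one _
        have hc : ((⌊t * 2 ^ n⌋ : ℤ) : ℝ) ≤ (i : ℝ) := by exact_mod_cast hfl
        linarith
    | succ d ih =>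
      intro s t hs hst ht hd
      rcases eq_or_lt_of_le (le_trans hst ht) with h1 | h1
      · have : t = 1 := le_antisymm ht (h1 ▸ hst)
        rw [h1, this]; simp
      have hi0 : 0 ≤ ⌊s * 2 ^ n⌋ := Int.floor_nonneg.mpr (by positivity)
      set i : ℕ := ⌊s * 2 ^ n⌋.toNat with hidef
      have hic : (i : ℝ) = (⌊s * 2 ^ n⌋ : ℝ) := by
        rw [hidef]; exact_mod_cast Int.toNat_of_nonneg hi0
      have hilt : i < 2 ^ n := by
        have ha : s * 2 ^ n < 2 ^ n := by nlinarith
        have h2 : (⌊s * 2 ^ n⌋ : ℝ) < ((2 ^ n : ℕ) : ℝ) := by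
          push_cast; exact lt_of_le_of_lt (Int.floor_le _) ha
        have h3 : ⌊s * 2 ^ n⌋ < ((2 ^ n : ℕ) : ℤ) := by exact_mod_cast h2
        omega
      have hsi : (i : ℝ) / 2 ^ n ≤ s := by
        rw [div_le_iff₀ hp, hic]; exact Int.floor_le _
      set r : ℝ := ((i : ℝ) + 1) / 2 ^ n with hrdef
      by_cases hcase : t ≤ r
      · exact loc i hilt s t hsi hst hcase
      push_neg at hcase
      have hr0 : 0 ≤ r := by positivity
      have hsr : s ≤ r := by
        rw [le_div_iff₀ hp]
        have : s * 2 ^ n < (⌊s * 2 ^ n⌋ : ℝ) + 1 := Int.lt_floor_add_one _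
        rw [hic]; linarith
      have hrfl : ⌊r * 2 ^ n⌋ = (i : ℤ) + 1 := by
        have : r * 2 ^ n = (i : ℝ) + 1 := by rw [hrdef]; field_simp
        rw [this]
        exact_mod_cast Int.floor_intCast ((i:ℤ)+1)
      have hstep : |g r - g s| ≤ L * (r - s) := loc i hilt s r hsi hsr (le_refl r)
      have hrest : |g t - g r| ≤ L * (t - r) := by
        refine ih r t hr0 hcase.le ht ?_
        rw [hrfl]; omega
      calc |g t - g s| ≤ |g t - g r| + |g r - g s| := abs_sub_le _ _ _
          _ ≤ L * (t - r) + L * (r - s) := add_le_add hrest hstep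
          _ = L * (t - s) := by ring
  intro s t hs hst ht
  refine key (⌊t * 2 ^ n⌋ - ⌊s * 2 ^ n⌋).toNat s t hs hst ht ?_
  have h0 : ⌊s * 2 ^ n⌋ ≤ ⌊t * 2 ^ n⌋ := Int.floor_le_floor (by nlinarith)
  omega

lemma mdGap_nonneg (B : ℝ → ℝ) (k : ℕ) : 0 ≤ mdGap B k := by
  have h0 : (0:ℕ) ∈ Finset.range (2 ^ (k-1)) := by simp
  exact le_trans (abs_nonneg _) (Finset.le_sup' (fun j : ℕ => |B ((2 * (j:ℝ) + 1) / 2 ^ k) -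
      (B ((j:ℝ) / 2 ^ (k - 1)) + B (((j:ℝ) + 1) / 2 ^ (k - 1))) / 2|) h0)

def lipC (f : ℝ → ℝ) (n : ℕ) : ℝ :=
  2 ^ n * (Finset.range (2 ^ n)).sup' (Finset.nonempty_range_iff.mpr (by positivity))
    fun i => |f (((i:ℝ) + 1) / 2 ^ n) - f ((i:ℝ) / 2 ^ n)|

lemma lipC_nonneg (f : ℝ → ℝ) (n : ℕ) : 0 ≤ lipC f n := by
  have h0 : (0:ℕ) ∈ Finset.range (2 ^ n) := by simp
  exact mul_nonneg (by positivity) (le_trans (abs_nonneg _)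
    (Finset.le_sup' (fun i : ℕ => |f (((i:ℝ) + 1) / 2 ^ n) - f ((i:ℝ) / 2 ^ n)|) h0))

lemma interp_lipschitz (f : ℝ → ℝ) (n : ℕ) :
    ∀ s t : ℝ, 0 ≤ s → s ≤ t → t ≤ 1 →
      |dyadicInterp n f t - dyadicInterp n f s| ≤ lipC f n * (t - s) := by
  refine glue _ n _ (lipC_nonneg f n) ?_
  intro i hi s t h1 hst h2
  rw [interp_cell f n i h1 (le_trans hst h2),
      interp_cell f n i (le_trans h1 hst) h2]
  have key : f ((i:ℝ)/2^n) + (t * 2^n - (i:ℝ)) * (f (((i:ℝ)+1)/2^n) - f ((i:ℝ)/2^n))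
      - (f ((i:ℝ)/2^n) + (s * 2^n - (i:ℝ)) * (f (((i:ℝ)+1)/2^n) - f ((i:ℝ)/2^n)))
      = (t - s) * (2^n * (f (((i:ℝ)+1)/2^n) - f ((i:ℝ)/2^n))) := by ring
  rw [key, abs_mul, abs_of_nonneg (by linarith : (0:ℝ) ≤ t - s), abs_mul,
    abs_of_nonneg (by positivity : (0:ℝ) ≤ (2:ℝ)^n)]
  have hD : |f (((i:ℝ)+1)/2^n) - f ((i:ℝ)/2^n)| ≤
      (Finset.range (2 ^ n)).sup' (Finset.nonempty_range_iff.mpr (by positivity))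
        (fun i : ℕ => |f (((i:ℝ) + 1) / 2 ^ n) - f ((i:ℝ) / 2 ^ n)|) :=
    Finset.le_sup' (fun i : ℕ => |f (((i:ℝ) + 1) / 2 ^ n) - f ((i:ℝ) / 2 ^ n)|)
      (Finset.mem_range.mpr hi)
  rw [lipC]
  have h2n : (0:ℝ) < 2^n := by positivity
  have hts : (0:ℝ) ≤ t - s := by linarith
  calc (t-s) * (2^n * |f (((i:ℝ)+1)/2^n) - f ((i:ℝ)/2^n)|)
      ≤ (t-s) * (2^n * ((Finset.range (2 ^ n)).sup' (Finset.nonempty_range_iff.mpr (by positivity))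
        (fun i : ℕ => |f (((i:ℝ) + 1) / 2 ^ n) - f ((i:ℝ) / 2 ^ n)|))) :=
        mul_le_mul_of_nonneg_left (mul_le_mul_of_nonneg_left hD h2n.le) hts
    _ = _ := mul_comm _ _

lemma delta_lipschitz (f : ℝ → ℝ) (n : ℕ) :
    ∀ s t : ℝ, 0 ≤ s → s ≤ t → t ≤ 1 →
      |(dyadicInterp (n+1) f t - dyadicInterp n f t) -
        (dyadicInterp (n+1) f s - dyadicInterp n f s)| ≤
        2 ^ (n+1) * mdGap f (n+1) * (t - s) := by
  have hmd : mdGap f (n+1) = (Finset.range (2^n)).sup'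
      (Finset.nonempty_range_iff.mpr (by positivity))
      (fun j : ℕ => |f ((2*(j:ℝ)+1)/2^(n+1)) -
        (f ((j:ℝ)/2^n) + f (((j:ℝ)+1)/2^n))/2|) := rfl
  refine glue _ (n+1) _ (mul_nonneg (by positivity) (mdGap_nonneg f (n+1))) ?_
  intro i hi s t h1 hst h2
  set j := i / 2 with hjdef
  have hpow : (2:ℕ)^(n+1) = 2 * 2^n := by ring
  have hij : i = 2*j ∨ i = 2*j + 1 := by omega
  have hj : j < 2^n := by omega
  have hp1 : (0:ℝ) < 2^(n+1) := by positivity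
  have hp0 : (0:ℝ) < 2^n := by positivity
  have hj1 : (j:ℝ)/2^n ≤ (i:ℝ)/2^(n+1) := by
    rw [div_le_div_iff₀ hp0 hp1]
    have h2j : (2*(j:ℝ)) ≤ (i:ℝ) := by exact_mod_cast (by omega : 2*j ≤ i)
    have e : (2:ℝ)^(n+1) = 2 * 2^n := by ring
    rw [e]; nlinarith
  have hj2 : ((i:ℝ)+1)/2^(n+1) ≤ ((j:ℝ)+1)/2^n := by
    rw [div_le_div_iff₀ hp1 hp0]
    have h2j : (i:ℝ) + 1 ≤ 2*((j:ℝ)+1) := by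
      have : i + 1 ≤ 2*(j+1) := by omega
      exact_mod_cast this
    have e : (2:ℝ)^(n+1) = 2 * 2^n := by ring
    rw [e]; nlinarith
  have hs0 : (j:ℝ)/2^n ≤ s := le_trans hj1 h1
  have ht2 : t ≤ ((j:ℝ)+1)/2^n := le_trans h2 hj2
  rw [interp_cell f (n+1) i h1 (hst.trans h2), interp_cell f (n+1) i (h1.trans hst) h2,
      interp_cell f n j hs0 (hst.trans ht2), interp_cell f n j (hs0.trans hst) ht2]
  have key : f ((i:ℝ)/2^(n+1)) + (t * 2^(n+1) - (i:ℝ)) *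
        (f (((i:ℝ)+1)/2^(n+1)) - f ((i:ℝ)/2^(n+1))) -
      (f ((j:ℝ)/2^n) + (t * 2^n - (j:ℝ)) * (f (((j:ℝ)+1)/2^n) - f ((j:ℝ)/2^n))) -
      (f ((i:ℝ)/2^(n+1)) + (s * 2^(n+1) - (i:ℝ)) *
        (f (((i:ℝ)+1)/2^(n+1)) - f ((i:ℝ)/2^(n+1))) -
      (f ((j:ℝ)/2^n) + (s * 2^n - (j:ℝ)) * (f (((j:ℝ)+1)/2^n) - f ((j:ℝ)/2^n)))) =
      (t - s) * (2^(n+1) * (f (((i:ℝ)+1)/2^(n+1)) - f ((i:ℝ)/2^(n+1))) -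
        2^n * (f (((j:ℝ)+1)/2^n) - f ((j:ℝ)/2^n))) := by ring
  rw [key, abs_mul, abs_of_nonneg (sub_nonneg.2 hst)]
  have hG : |f ((2*(j:ℝ)+1)/2^(n+1)) - (f ((j:ℝ)/2^n) + f (((j:ℝ)+1)/2^n))/2|
      ≤ mdGap f (n+1) := by
    rw [hmd]
    exact Finset.le_sup' (fun j : ℕ => |f ((2*(j:ℝ)+1)/2^(n+1)) -
      (f ((j:ℝ)/2^n) + f (((j:ℝ)+1)/2^n))/2|) (Finset.mem_range.mpr hj)
  have hM : |2^(n+1) * (f (((i:ℝ)+1)/2^(n+1)) - f ((i:ℝ)/2^(n+1))) -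
      2^n * (f (((j:ℝ)+1)/2^n) - f ((j:ℝ)/2^n))| ≤ 2^(n+1) * mdGap f (n+1) := by
    rcases hij with h | h
    · have e1 : (i:ℝ)/2^(n+1) = (j:ℝ)/2^n := by
        rw [h]; push_cast; rw [div_eq_div_iff hp1.ne' hp0.ne']; ring
      have e2 : ((i:ℝ)+1)/2^(n+1) = (2*(j:ℝ)+1)/2^(n+1) := by
        rw [h]; push_cast; ring_nf
      have e3 : 2^(n+1) * (f (((i:ℝ)+1)/2^(n+1)) - f ((i:ℝ)/2^(n+1))) -
          2^n * (f (((j:ℝ)+1)/2^n) - f ((j:ℝ)/2^n)) =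
          2^(n+1) * (f ((2*(j:ℝ)+1)/2^(n+1)) -
            (f ((j:ℝ)/2^n) + f (((j:ℝ)+1)/2^n))/2) := by
        rw [e1, e2]; ring
      rw [e3, abs_mul, abs_of_nonneg hp1.le]
      exact mul_le_mul_of_nonneg_left hG hp1.le
    · have e1 : (i:ℝ)/2^(n+1) = (2*(j:ℝ)+1)/2^(n+1) := by
        rw [h]; push_cast; ring_nf
      have e2 : ((i:ℝ)+1)/2^(n+1) = ((j:ℝ)+1)/2^n := by
        rw [h]; push_cast; rw [div_eq_div_iff hp1.ne' hp0.ne']; ring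
      have e3 : 2^(n+1) * (f (((i:ℝ)+1)/2^(n+1)) - f ((i:ℝ)/2^(n+1))) -
          2^n * (f (((j:ℝ)+1)/2^n) - f ((j:ℝ)/2^n)) =
          -(2^(n+1) * (f ((2*(j:ℝ)+1)/2^(n+1)) -
            (f ((j:ℝ)/2^n) + f (((j:ℝ)+1)/2^n))/2)) := by
        rw [e1, e2]; ring
      rw [e3, abs_neg, abs_mul, abs_of_nonneg hp1.le]
      exact mul_le_mul_of_nonneg_left hG hp1.le
  calc (t - s) * |2^(n+1) * (f (((i:ℝ)+1)/2^(n+1)) - f ((i:ℝ)/2^(n+1))) -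
        2^n * (f (((j:ℝ)+1)/2^n) - f ((j:ℝ)/2^n))|
      ≤ (t - s) * (2^(n+1) * mdGap f (n+1)) :=
        mul_le_mul_of_nonneg_left hM (sub_nonneg.2 hst)
    _ = 2^(n+1) * mdGap f (n+1) * (t - s) := mul_comm _ _

lemma delta_zero_grid (f : ℝ → ℝ) (n : ℕ) (l : ℕ) :
    dyadicInterp (n+1) f ((l:ℝ)/2^n) - dyadicInterp n f ((l:ℝ)/2^n) = 0 := by
  have hp0 : (0:ℝ) < 2^n := by positivity
  have e : ((l:ℝ))/2^n = (((2*l : ℕ)):ℝ)/2^(n+1) := by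
    push_cast
    rw [div_eq_div_iff hp0.ne' (by positivity)]
    ring
  rw [interp_grid f n l, e, interp_grid f (n+1) (2*l), ← e, sub_self]

lemma delta_bound (f : ℝ → ℝ) (n : ℕ) :
    ∀ t : ℝ, 0 ≤ t → t ≤ 1 →
      |dyadicInterp (n+1) f t - dyadicInterp n f t| ≤ mdGap f (n+1) := by
  intro t ht0 ht1
  have hp0 : (0:ℝ) < 2^n := by positivity
  have hp1 : (0:ℝ) < 2^(n+1) := by positivity
  have hM := mdGap_nonneg f (n+1)
  rcases eq_or_lt_of_le ht1 with h1 | h1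
  · have e1 : t = ((2^n : ℕ):ℝ)/2^n := by rw [h1]; push_cast; field_simp
    rw [e1, delta_zero_grid f n (2^n)]
    simpa using hM
  · set j := ⌊t*2^n⌋.toNat with hjdef
    have hi0 : 0 ≤ ⌊t*2^n⌋ := Int.floor_nonneg.mpr (by positivity)
    have hic : (j:ℝ) = (⌊t*2^n⌋:ℝ) := by rw [hjdef]; exact_mod_cast Int.toNat_of_nonneg hi0
    have hjlt : j < 2^n := by
      have ha : t * 2^n < 2^n := by nlinarith
      have h2 : (⌊t * 2^n⌋ : ℝ) < ((2^n : ℕ) : ℝ) := by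
        push_cast; exact lt_of_le_of_lt (Int.floor_le _) ha
      have h3 : ⌊t * 2^n⌋ < ((2^n : ℕ) : ℤ) := by exact_mod_cast h2
      omega
    have hl : (j:ℝ)/2^n ≤ t := by rw [div_le_iff₀ hp0, hic]; exact Int.floor_le _
    have hr : t ≤ ((j:ℝ)+1)/2^n := by
      rw [le_div_iff₀ hp0, hic]; exact (Int.lt_floor_add_one _).le
    by_cases hmid : t ≤ (2*(j:ℝ)+1)/2^(n+1)
    · have lip := delta_lipschitz f n ((j:ℝ)/2^n) t (by positivity) hl ht1
      rw [delta_zero_grid f n j, sub_zero] at lip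
      refine le_trans lip ?_
      have hmid' : t * 2^(n+1) ≤ 2*(j:ℝ)+1 := by
        rw [← le_div_iff₀ hp1]; exact hmid
      have ej : (j:ℝ)/2^n * 2^(n+1) = 2*j := by field_simp; ring
      calc 2^(n+1) * mdGap f (n+1) * (t - (j:ℝ)/2^n)
          = mdGap f (n+1) * (t*2^(n+1) - (j:ℝ)/2^n * 2^(n+1)) := by ring
        _ = mdGap f (n+1) * (t*2^(n+1) - 2*(j:ℝ)) := by rw [ej]
        _ ≤ mdGap f (n+1) * 1 := mul_le_mul_of_nonneg_left (by linarith) hM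
        _ = mdGap f (n+1) := mul_one _
    · push_neg at hmid
      have hr1 : ((j:ℝ)+1)/2^n ≤ 1 := by
        rw [div_le_one hp0]
        have : ((j+1 : ℕ):ℝ) ≤ ((2^n : ℕ):ℝ) := by exact_mod_cast (by omega : j+1 ≤ 2^n)
        push_cast at this; linarith
      have lip := delta_lipschitz f n t (((j:ℝ)+1)/2^n) ht0 hr hr1
      have gz : dyadicInterp (n+1) f (((j:ℝ)+1)/2^n) -
          dyadicInterp n f (((j:ℝ)+1)/2^n) = 0 := by
        have := delta_zero_grid f n (j+1); push_cast at this; exact this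
      rw [gz, zero_sub, abs_neg] at lip
      refine le_trans lip ?_
      have hmid' : 2*(j:ℝ)+1 ≤ t * 2^(n+1) := by
        rw [← div_le_iff₀ hp1]; exact hmid.le
      have ej : ((j:ℝ)+1)/2^n * 2^(n+1) = 2*j+2 := by field_simp; ring
      calc 2^(n+1) * mdGap f (n+1) * (((j:ℝ)+1)/2^n - t)
          = mdGap f (n+1) * (((j:ℝ)+1)/2^n * 2^(n+1) - t*2^(n+1)) := by ring
        _ = mdGap f (n+1) * (2*(j:ℝ)+2 - t*2^(n+1)) := by rw [ej]
        _ ≤ mdGap f (n+1) * 1 := mul_le_mul_of_nonneg_left (by linarith) hM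
        _ = mdGap f (n+1) := mul_one _

lemma delta_holder (f : ℝ → ℝ) (n : ℕ) {a : ℝ} (ha0 : 0 < a) (ha1 : a < 1) :
    ∀ s t : ℝ, 0 ≤ s → s < t → t ≤ 1 →
      |(dyadicInterp (n+1) f t - dyadicInterp n f t) -
        (dyadicInterp (n+1) f s - dyadicInterp n f s)| ≤
        2 * mdGap f (n+1) * ((2:ℝ)^(n+1)) ^ a * (t - s) ^ a := by
  intro s t hs0 hst ht1
  have hp1 : (0:ℝ) < 2^(n+1) := by positivity
  have hM := mdGap_nonneg f (n+1)
  have hts : (0:ℝ) < t - s := by linarith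
  have htsa : (0:ℝ) < (t - s) ^ a := Real.rpow_pos_of_pos hts a
  by_cases hc : t - s ≤ ((2:ℝ)^(n+1))⁻¹
  · have lip := delta_lipschitz f n s t hs0 hst.le ht1
    refine le_trans lip ?_
    have e1 : t - s = (t-s)^a * (t-s)^(1-a) := by
      rw [← Real.rpow_add hts]; norm_num
    have e2 : (t-s)^(1-a) ≤ (((2:ℝ)^(n+1))⁻¹)^(1-a) :=
      Real.rpow_le_rpow hts.le hc (by linarith)
    have e3 : (((2:ℝ)^(n+1))⁻¹)^(1-a) = ((2:ℝ)^(n+1))^(-(1-a)) := by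
      rw [Real.inv_rpow hp1.le, ← Real.rpow_neg hp1.le]
    have e4 : (2:ℝ)^(n+1) * ((2:ℝ)^(n+1))^(-(1-a)) = ((2:ℝ)^(n+1)) ^ a := by
      nth_rewrite 1 [← Real.rpow_one ((2:ℝ)^(n+1))]
      rw [← Real.rpow_add hp1]
      ring_nf
    calc 2^(n+1) * mdGap f (n+1) * (t - s)
        = 2^(n+1) * mdGap f (n+1) * ((t-s)^a * (t-s)^(1-a)) := by rw [← e1]
      _ ≤ 2^(n+1) * mdGap f (n+1) * ((t-s)^a * ((2:ℝ)^(n+1))^(-(1-a))) := by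
          rw [← e3]
          refine mul_le_mul_of_nonneg_left ?_ (by positivity)
          exact mul_le_mul_of_nonneg_left e2 htsa.le
      _ = mdGap f (n+1) * ((2:ℝ)^(n+1) * ((2:ℝ)^(n+1))^(-(1-a))) * (t-s)^a := by ring
      _ = mdGap f (n+1) * ((2:ℝ)^(n+1))^a * (t-s)^a := by rw [e4]
      _ ≤ 2 * mdGap f (n+1) * ((2:ℝ)^(n+1))^a * (t-s)^a := by
          have hca : (0:ℝ) ≤ ((2:ℝ)^(n+1))^a := (Real.rpow_pos_of_pos hp1 a).le
          nlinarith [mul_nonneg (mul_nonneg hM hca) htsa.le]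
  · push_neg at hc
    have hb1 : 1 ≤ (2:ℝ)^(n+1) * (t - s) := by
      rw [← mul_inv_cancel₀ hp1.ne']
      exact mul_le_mul_of_nonneg_left hc.le hp1.le
    have hbig : (1:ℝ) ≤ ((2:ℝ)^(n+1) * (t - s)) ^ a :=
      Real.one_le_rpow hb1 ha0.le
    have hsplit : ((2:ℝ)^(n+1) * (t - s)) ^ a = ((2:ℝ)^(n+1))^a * (t-s)^a :=
      Real.mul_rpow hp1.le hts.le
    have tri : |(dyadicInterp (n+1) f t - dyadicInterp n f t) -
        (dyadicInterp (n+1) f s - dyadicInterp n f s)| ≤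
        2 * mdGap f (n+1) := by
      have h1 := delta_bound f n t (by linarith) ht1
      have h2 := delta_bound f n s hs0 (by linarith)
      calc |(dyadicInterp (n+1) f t - dyadicInterp n f t) -
          (dyadicInterp (n+1) f s - dyadicInterp n f s)|
          ≤ |dyadicInterp (n+1) f t - dyadicInterp n f t| +
            |dyadicInterp (n+1) f s - dyadicInterp n f s| := abs_sub _ _
        _ ≤ 2 * mdGap f (n+1) := by linarith
    refine le_trans tri ?_
    calc 2 * mdGap f (n+1) = 2 * mdGap f (n+1) * 1 := by ring
      _ ≤ 2 * mdGap f (n+1) * (((2:ℝ)^(n+1)) * (t-s))^a := by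
          refine mul_le_mul_of_nonneg_left hbig (by linarith)
      _ = 2 * mdGap f (n+1) * ((2:ℝ)^(n+1))^a * (t-s)^a := by rw [hsplit]; ring

lemma interp_tendsto (f : ℝ → ℝ) (hf : ContinuousOn f (Set.Icc 0 1)) {t : ℝ}
    (ht : t ∈ Set.Icc (0:ℝ) 1) :
    Tendsto (fun n => dyadicInterp n f t) atTop (𝓝 (f t)) := by
  obtain ⟨ht0, ht1⟩ := ht
  rcases eq_or_lt_of_le ht1 with h1 | h1
  · have hconst : ∀ n : ℕ, dyadicInterp n f t = f t := by
      intro n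
      have e : ((2^n : ℕ):ℝ)/2^n = t := by rw [h1]; push_cast; field_simp
      have := interp_grid f n (2^n)
      rwa [e] at this
    simpa [hconst] using (tendsto_const_nhds : Tendsto (fun _ : ℕ => f t) atTop (𝓝 (f t)))
  · set u : ℕ → ℝ := fun n => (⌊t*2^n⌋:ℝ)/2^n with hu
    set v : ℕ → ℝ := fun n => ((⌊t*2^n⌋:ℝ)+1)/2^n with hv
    have hp : ∀ n : ℕ, (0:ℝ) < 2^n := fun n => by positivity
    have hu_le : ∀ n, u n ≤ t := fun n => by
      rw [hu]; simp only []; rw [div_le_iff₀ (hp n)]; exact Int.floor_le _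
    have hu_gt : ∀ n, t - 1/2^n ≤ u n := fun n => by
      rw [hu]; simp only []
      rw [sub_le_iff_le_add, ← add_div, le_div_iff₀ (hp n)]
      exact (Int.lt_floor_add_one (t*2^n)).le
    have hu_mem : ∀ n, u n ∈ Set.Icc (0:ℝ) 1 := fun n =>
      ⟨by rw [hu]; positivity, le_trans (hu_le n) ht1⟩
    have hv_ge : ∀ n, t ≤ v n := fun n => by
      rw [hv]; simp only []; rw [le_div_iff₀ (hp n)]
      exact (Int.lt_floor_add_one (t*2^n)).le
    have hv_le : ∀ n, v n ≤ t + 1/2^n := fun n => by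
      rw [hv]; simp only []
      rw [div_le_iff₀ (hp n), add_mul, one_div, inv_mul_cancel₀ (hp n).ne']
      have := Int.floor_le (t*2^n); linarith
    have hv_mem : ∀ n, v n ∈ Set.Icc (0:ℝ) 1 := by
      intro n
      refine ⟨le_trans ht0 (hv_ge n), ?_⟩
      rw [hv]; simp only []
      rw [div_le_one (hp n)]
      have hfl : (⌊t*2^n⌋:ℝ) < 2^n := lt_of_le_of_lt (Int.floor_le _) (by nlinarith [hp n])
      have hfl' : ⌊t*2^n⌋ < ((2^n : ℕ):ℤ) := by exact_mod_cast (by push_cast; exact hfl :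
        (⌊t*2^n⌋:ℝ) < ((2^n:ℕ):ℝ))
      have : (⌊t*2^n⌋:ℤ) + 1 ≤ ((2^n : ℕ):ℤ) := by omega
      calc (⌊t*2^n⌋:ℝ) + 1 ≤ ((2^n:ℕ):ℝ) := by exact_mod_cast this
        _ = 2^n := by push_cast; ring
    have hpow0 : Tendsto (fun n : ℕ => 1/(2:ℝ)^n) atTop (𝓝 0) := by
      simpa [one_div] using
        (tendsto_pow_atTop_nhds_zero_of_lt_one (by norm_num : (0:ℝ) ≤ 1/2)
          (by norm_num : (1:ℝ)/2 < 1)).congr (fun n => by rw [one_div, inv_pow])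
    have hu_t : Tendsto u atTop (𝓝 t) := by
      refine tendsto_of_tendsto_of_tendsto_of_le_of_le
        (g := fun n => t - 1/(2:ℝ)^n) (h := fun _ => t) ?_ tendsto_const_nhds hu_gt hu_le
      simpa using tendsto_const_nhds.sub hpow0
    have hv_t : Tendsto v atTop (𝓝 t) := by
      refine tendsto_of_tendsto_of_tendsto_of_le_of_le
        (g := fun _ => t) (h := fun n => t + 1/(2:ℝ)^n) tendsto_const_nhds ?_ hv_ge hv_le
      simpa using tendsto_const_nhds.add hpow0
    have hcont := hf t ⟨ht0, ht1⟩
    have hfu : Tendsto (fun n => f (u n)) atTop (𝓝 (f t)) :=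
      (hcont.tendsto).comp (tendsto_nhdsWithin_of_tendsto_nhds_of_eventually_within u hu_t
        (Eventually.of_forall hu_mem))
    have hfv : Tendsto (fun n => f (v n)) atTop (𝓝 (f t)) :=
      (hcont.tendsto).comp (tendsto_nhdsWithin_of_tendsto_nhds_of_eventually_within v hv_t
        (Eventually.of_forall hv_mem))
    have habs : ∀ n, |dyadicInterp n f t - f t| ≤
        2*|f (u n) - f t| + |f (v n) - f t| := by
      intro n
      have hθ0 : 0 ≤ t*2^n - (⌊t*2^n⌋:ℝ) := by
        have := Int.floor_le (t*2^n); linarith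
      have hθ1 : t*2^n - (⌊t*2^n⌋:ℝ) ≤ 1 := by
        have := Int.lt_floor_add_one (t*2^n); linarith
      have e : dyadicInterp n f t - f t =
          (f (u n) - f t) + (t*2^n - (⌊t*2^n⌋:ℝ)) * (f (v n) - f (u n)) := by
        rw [dyadicInterp, hu, hv]; ring
      rw [e]
      calc |(f (u n) - f t) + (t*2^n - (⌊t*2^n⌋:ℝ)) * (f (v n) - f (u n))|
          ≤ |f (u n) - f t| + |(t*2^n - (⌊t*2^n⌋:ℝ)) * (f (v n) - f (u n))| := abs_add_le _ _
        _ ≤ |f (u n) - f t| + |f (v n) - f (u n)| := by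
            rw [abs_mul, abs_of_nonneg hθ0]
            nlinarith [abs_nonneg (f (v n) - f (u n))]
        _ ≤ |f (u n) - f t| + (|f (v n) - f t| + |f t - f (u n)|) := by
            have := abs_sub_le (f (v n)) (f t) (f (u n)); linarith
        _ = 2*|f (u n) - f t| + |f (v n) - f t| := by rw [abs_sub_comm (f t)]; ring
    have hh : Tendsto (fun n => 2*|f (u n) - f t| + |f (v n) - f t|) atTop (𝓝 0) := by
      have h1 : Tendsto (fun n => |f (u n) - f t|) atTop (𝓝 0) := by
        simpa using ((hfu.sub (tendsto_const_nhds (x := f t))).abs)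
      have h2 : Tendsto (fun n => |f (v n) - f t|) atTop (𝓝 0) := by
        simpa using ((hfv.sub (tendsto_const_nhds (x := f t))).abs)
      simpa using (h1.const_mul 2).add h2
    have habs0 : Tendsto (fun n => |dyadicInterp n f t - f t|) atTop (𝓝 0) :=
      squeeze_zero (fun n => abs_nonneg _) habs hh
    have := habs0.const_add (f t)
    have key : Tendsto (fun n => dyadicInterp n f t) atTop (𝓝 (f t)) := by
      refine tendsto_of_tendsto_of_tendsto_of_le_of_le
        (g := fun n => f t - |dyadicInterp n f t - f t|)
        (h := fun n => f t + |dyadicInterp n f t - f t|) ?_ ?_ ?_ ?_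
      · simpa using tendsto_const_nhds.sub habs0
      · simpa using tendsto_const_nhds.add habs0
      · intro n; dsimp only; have h := neg_abs_le (dyadicInterp n f t - f t); linarith
      · intro n; dsimp only; have h := le_abs_self (dyadicInterp n f t - f t); linarith
    exact key

lemma rpow_combine (H δ α : ℝ) (m : ℕ) :
    (2:ℝ)^(-(H-δ)*((m:ℕ):ℝ)) * ((2:ℝ)^(m:ℕ))^α = ((2:ℝ)^(-(H-α-δ)))^(m:ℕ) := by
  rw [← Real.rpow_natCast (2:ℝ) m, ← Real.rpow_natCast ((2:ℝ)^(-(H-α-δ))) m,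
    ← Real.rpow_mul (by norm_num), ← Real.rpow_mul (by norm_num),
    ← Real.rpow_add (by norm_num : (0:ℝ) < 2)]
  congr 1; ring

lemma holder_det (H α δ ρ : ℝ) (hα0 : 0 < α) (hα1 : α < 1) (hαH : α + δ < H)
    (hδ0 : 0 < δ) (hρ : 0 < ρ) (f : ℝ → ℝ) (hf : ContinuousOn f (Set.Icc 0 1))
    (hgap : ∀ k : ℕ, lastRB H δ ρ f + 1 ≤ k → mdGap f k ≤ ρ * (2:ℝ)^(-(H-δ)*(k:ℝ))) :
    holderNorm01 α f ≤ holderNorm01 α (dyadicInterp (lastRB H δ ρ f) f) +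
      ρ * (2:ℝ)^(2-α) * (2:ℝ)^(-(H-α-δ)*((lastRB H δ ρ f : ℝ)+1)) /
        (1 - (2:ℝ)^(-(H-α-δ))) := by
  set N := lastRB H δ ρ f with hN
  set r : ℝ := (2:ℝ)^(-(H-α-δ)) with hrdef
  have hr0 : 0 < r := Real.rpow_pos_of_pos (by norm_num) _
  have hr1 : r < 1 := Real.rpow_lt_one_of_one_lt_of_neg (by norm_num) (by linarith)
  have h1r : 0 < 1 - r := by linarith
  -- the tail constant
  have hrN : (2:ℝ)^(-(H-α-δ)*((N:ℝ)+1)) = r^(N+1) := by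
    rw [hrdef, ← Real.rpow_natCast ((2:ℝ)^(-(H-α-δ))) (N+1),
      ← Real.rpow_mul (by norm_num)]
    push_cast; ring_nf
  set C : ℝ := ρ * (2:ℝ)^(2-α) * (2:ℝ)^(-(H-α-δ)*((N:ℝ)+1)) / (1 - r) with hCdef
  have hC0 : 0 ≤ C := by
    rw [hCdef]
    have : (0:ℝ) < (2:ℝ)^(2-α) := Real.rpow_pos_of_pos (by norm_num) _
    have h2 : (0:ℝ) < (2:ℝ)^(-(H-α-δ)*((N:ℝ)+1)) := Real.rpow_pos_of_pos (by norm_num) _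
    positivity
  have hC2 : 2*ρ*(r^(N+1) * (1-r)⁻¹) ≤ C := by
    rw [hCdef, hrN]
    have h2a : (2:ℝ) ≤ (2:ℝ)^(2-α) := by
      nth_rewrite 1 [← Real.rpow_one (2:ℝ)]
      exact Real.rpow_le_rpow_of_exponent_le (by norm_num) (by linarith)
    rw [div_eq_mul_inv]
    have hx : (0:ℝ) ≤ ρ * (r^(N+1) * (1-r)⁻¹) := by positivity
    nlinarith [pow_pos hr0 (N+1), inv_pos.2 h1r]
  -- geometric sum bound
  have hgeom : ∀ m : ℕ, (∑ i ∈ Finset.range m, r^(N+1+i)) ≤ r^(N+1) * (1-r)⁻¹ := by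
    intro m
    have : (∑ i ∈ Finset.range m, r^(N+1+i)) = r^(N+1) * ∑ i ∈ Finset.range m, r^i := by
      rw [Finset.mul_sum]
      exact Finset.sum_congr rfl fun i _ => by rw [pow_add]
    rw [this]
    refine mul_le_mul_of_nonneg_left ?_ (pow_pos hr0 _).le
    calc (∑ i ∈ Finset.range m, r^i) ≤ ∑' i : ℕ, r^i :=
          Summable.sum_le_tsum _ (fun i _ => (pow_pos hr0 i).le)
            (summable_geometric_of_lt_one hr0.le hr1)
      _ = (1-r)⁻¹ := tsum_geometric_of_lt_one hr0.le hr1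
  -- main pointwise estimate
  have main : ∀ s t : ℝ, 0 ≤ s → s < t → t ≤ 1 →
      |f t - f s| ≤ |dyadicInterp N f t - dyadicInterp N f s| +
        2*ρ*(r^(N+1) * (1-r)⁻¹) * (t-s)^α := by
    intro s t hs0 hst ht1
    have htsa : (0:ℝ) < (t-s)^α := Real.rpow_pos_of_pos (by linarith) α
    have step : ∀ m : ℕ, |dyadicInterp (N+m) f t - dyadicInterp (N+m) f s| ≤
        |dyadicInterp N f t - dyadicInterp N f s| +
          (∑ i ∈ Finset.range m, 2*ρ*r^(N+1+i)) * (t-s)^α := by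
      intro m
      induction m with
      | zero => simp
      | succ m ih =>
        have hidx : N + (m+1) = (N+m)+1 := by ring
        rw [hidx]
        have hd := delta_holder f (N+m) hα0 hα1 s t hs0 hst ht1
        have hg := hgap ((N+m)+1) (by omega)
        have hX : (2:ℝ)^(-(H-δ)*(((N+m+1 : ℕ)):ℝ)) * ((2:ℝ)^(N+m+1))^α =
            r^(N+m+1) := rpow_combine H δ α (N+m+1)
        have hmd0 := mdGap_nonneg f ((N+m)+1)
        have hXpos : (0:ℝ) < ((2:ℝ)^(N+m+1))^α :=
          Real.rpow_pos_of_pos (by positivity) _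
        have hd2 : |(dyadicInterp ((N+m)+1) f t - dyadicInterp (N+m) f t) -
            (dyadicInterp ((N+m)+1) f s - dyadicInterp (N+m) f s)| ≤
            2*ρ*r^(N+1+m) * (t-s)^α := by
          refine le_trans hd ?_
          have e : N+1+m = N+m+1 := by ring
          rw [e]
          have h1 : 2 * mdGap f (N+m+1) * ((2:ℝ)^(N+m+1))^α ≤
              2 * (ρ * (2:ℝ)^(-(H-δ)*(((N+m+1 : ℕ)):ℝ))) * ((2:ℝ)^(N+m+1))^α := by
            have := mul_le_mul_of_nonneg_right
              (mul_le_mul_of_nonneg_left hg (by norm_num : (0:ℝ) ≤ 2)) hXpos.le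
            exact this
          have h2 : 2 * (ρ * (2:ℝ)^(-(H-δ)*(((N+m+1 : ℕ)):ℝ))) * ((2:ℝ)^(N+m+1))^α =
              2*ρ*r^(N+m+1) := by rw [← hX]; ring
          refine mul_le_mul_of_nonneg_right ?_ htsa.le
          rw [← h2]; exact h1
        have tri : |dyadicInterp ((N+m)+1) f t - dyadicInterp ((N+m)+1) f s| ≤
            |dyadicInterp (N+m) f t - dyadicInterp (N+m) f s| +
            |(dyadicInterp ((N+m)+1) f t - dyadicInterp (N+m) f t) -
              (dyadicInterp ((N+m)+1) f s - dyadicInterp (N+m) f s)| := by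
          have : dyadicInterp ((N+m)+1) f t - dyadicInterp ((N+m)+1) f s =
              (dyadicInterp (N+m) f t - dyadicInterp (N+m) f s) +
              ((dyadicInterp ((N+m)+1) f t - dyadicInterp (N+m) f t) -
                (dyadicInterp ((N+m)+1) f s - dyadicInterp (N+m) f s)) := by ring
          rw [this]; exact abs_add_le _ _
        calc |dyadicInterp ((N+m)+1) f t - dyadicInterp ((N+m)+1) f s|
            ≤ |dyadicInterp (N+m) f t - dyadicInterp (N+m) f s| +
              2*ρ*r^(N+1+m) * (t-s)^α := by
              refine le_trans tri ?_; linarith [hd2]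
          _ ≤ |dyadicInterp N f t - dyadicInterp N f s| +
              (∑ i ∈ Finset.range m, 2*ρ*r^(N+1+i)) * (t-s)^α +
              2*ρ*r^(N+1+m) * (t-s)^α := by linarith [ih]
          _ = |dyadicInterp N f t - dyadicInterp N f s| +
              (∑ i ∈ Finset.range (m+1), 2*ρ*r^(N+1+i)) * (t-s)^α := by
              rw [Finset.sum_range_succ]; ring
    have bound : ∀ m : ℕ, |dyadicInterp (N+m) f t - dyadicInterp (N+m) f s| ≤
        |dyadicInterp N f t - dyadicInterp N f s| +
          2*ρ*(r^(N+1) * (1-r)⁻¹) * (t-s)^α := by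
      intro m
      refine le_trans (step m) ?_
      have : (∑ i ∈ Finset.range m, 2*ρ*r^(N+1+i)) =
          2*ρ*(∑ i ∈ Finset.range m, r^(N+1+i)) := by
        rw [Finset.mul_sum]
      rw [this]
      have h := hgeom m
      have : 2*ρ*(∑ i ∈ Finset.range m, r^(N+1+i)) ≤ 2*ρ*(r^(N+1) * (1-r)⁻¹) := by
        refine mul_le_mul_of_nonneg_left h (by positivity)
      nlinarith [htsa]
    have hlim : Tendsto (fun m : ℕ => |dyadicInterp (N+m) f t - dyadicInterp (N+m) f s|)
        atTop (𝓝 (|f t - f s|)) := by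
      have h1 : Tendsto (fun n : ℕ => dyadicInterp n f t) atTop (𝓝 (f t)) :=
        interp_tendsto f hf ⟨by linarith, ht1⟩
      have h2 : Tendsto (fun n : ℕ => dyadicInterp n f s) atTop (𝓝 (f s)) :=
        interp_tendsto f hf ⟨hs0, by linarith⟩
      have h3 := ((h1.sub h2).abs).comp (tendsto_add_atTop_nat N)
      simpa [Function.comp_def, Nat.add_comm] using h3
    exact le_of_tendsto hlim (Eventually.of_forall bound)
  -- quotient estimate
  have quot : ∀ c ∈ {c : ℝ | ∃ s t : ℝ, 0 ≤ s ∧ s < t ∧ t ≤ 1 ∧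
      c = |f t - f s| / (t - s) ^ α},
      c ≤ holderNorm01 α (dyadicInterp N f) + C := by
    rintro c ⟨s, t, hs0, hst, ht1, rfl⟩
    have htsa : (0:ℝ) < (t-s)^α := Real.rpow_pos_of_pos (by linarith) α
    have hmain := main s t hs0 hst ht1
    have hq : |f t - f s| / (t-s)^α ≤
        |dyadicInterp N f t - dyadicInterp N f s| / (t-s)^α +
          2*ρ*(r^(N+1) * (1-r)⁻¹) := by
      have h1 : |f t - f s|/(t-s)^α ≤
          (|dyadicInterp N f t - dyadicInterp N f s| +
            2*ρ*(r^(N+1) * (1-r)⁻¹) * (t-s)^α)/(t-s)^α := by gcongr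
      rwa [add_div, mul_div_assoc, div_self htsa.ne', mul_one] at h1
    have hBN : |dyadicInterp N f t - dyadicInterp N f s| / (t-s)^α ≤
        holderNorm01 α (dyadicInterp N f) := by
      have hbdd : BddAbove {c : ℝ | ∃ s t : ℝ, 0 ≤ s ∧ s < t ∧ t ≤ 1 ∧
          c = |dyadicInterp N f t - dyadicInterp N f s| / (t - s) ^ α} := by
        refine ⟨lipC f N, ?_⟩
        rintro c ⟨s', t', hs0', hst', ht1', rfl⟩
        have hts' : (0:ℝ) < t' - s' := by linarith
        have htsa' : (0:ℝ) < (t'-s')^α := Real.rpow_pos_of_pos hts' α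
        have hlip := interp_lipschitz f N s' t' hs0' hst'.le ht1'
        rw [div_le_iff₀ htsa']
        have h1a : (t'-s')^(1-α) ≤ 1 :=
          Real.rpow_le_one hts'.le (by linarith) (by linarith)
        have e : (t'-s') = (t'-s')^α * (t'-s')^(1-α) := by
          rw [← Real.rpow_add hts']; norm_num
        calc |dyadicInterp N f t' - dyadicInterp N f s'| ≤ lipC f N * (t'-s') := hlip
          _ = lipC f N * ((t'-s')^α * (t'-s')^(1-α)) := by rw [← e]
          _ ≤ lipC f N * ((t'-s')^α * 1) := by
              refine mul_le_mul_of_nonneg_left ?_ (lipC_nonneg f N)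
              exact mul_le_mul_of_nonneg_left h1a htsa'.le
          _ = lipC f N * (t'-s')^α := by ring
      exact le_csSup hbdd ⟨s, t, hs0, hst, ht1, rfl⟩
    calc |f t - f s| / (t-s)^α
        ≤ |dyadicInterp N f t - dyadicInterp N f s| / (t-s)^α +
          2*ρ*(r^(N+1) * (1-r)⁻¹) := hq
      _ ≤ holderNorm01 α (dyadicInterp N f) + C := add_le_add hBN hC2
  have hnn : 0 ≤ holderNorm01 α (dyadicInterp N f) + C := by
    refine add_nonneg ?_ hC0
    refine Real.sSup_nonneg ?_
    rintro c ⟨s, t, hs0, hst, ht1, rfl⟩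
    have htsa : (0:ℝ) < (t-s)^α := Real.rpow_pos_of_pos (by linarith) α
    positivity
  exact Real.sSup_le quot hnn

lemma gaussian_tail (v : ℝ≥0) (hv : v ≠ 0) (x : ℝ) (hx : 0 < x) :
    gaussianReal 0 v {y | x ≤ |y|} ≤ ENNReal.ofReal (2 * Real.exp (-x^2/(4*v))) := by
  have hS : MeasurableSet {y : ℝ | x ≤ |y|} :=
    (isClosed_le continuous_const continuous_abs).measurableSet
  have hv0 : (0:ℝ) < v := by positivity
  have h2v : (2*v : ℝ≥0) ≠ 0 := by positivity
  rw [gaussianReal_of_var_ne_zero 0 hv, withDensity_apply _ hS]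
  have keyR : ∀ y : ℝ, y ∈ {y : ℝ | x ≤ |y|} →
      gaussianPDFReal 0 v y ≤
        Real.sqrt 2 * Real.exp (-x^2/(4*v)) * gaussianPDFReal 0 (2*v) y := by
    intro y hy
    simp only [Set.mem_setOf_eq] at hy
    rw [gaussianPDFReal, gaussianPDFReal]
    have hx2 : x^2 ≤ y^2 := by
      have := sq_abs y
      nlinarith [abs_nonneg y, sq_abs y]
    have hsq : Real.sqrt (2*Real.pi*((2*v : ℝ≥0):ℝ)) =
        Real.sqrt 2 * Real.sqrt (2*Real.pi*(v:ℝ)) := by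
      rw [← Real.sqrt_mul (by norm_num : (0:ℝ) ≤ 2)]
      congr 1
      push_cast
      ring
    rw [hsq]
    have hA : (0:ℝ) < Real.sqrt (2*Real.pi*(v:ℝ)) := by
      apply Real.sqrt_pos.mpr; positivity
    have hs2 : (0:ℝ) < Real.sqrt 2 := by positivity
    rw [mul_inv]
    have hexp : Real.exp (-(y-0)^2/(2*(v:ℝ))) ≤
        Real.exp (-x^2/(4*(v:ℝ))) * Real.exp (-(y-0)^2/(2*((2*v : ℝ≥0):ℝ))) := by
      rw [← Real.exp_add]
      apply Real.exp_le_exp.mpr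
      have : ((2*v : ℝ≥0):ℝ) = 2*(v:ℝ) := by push_cast; ring
      rw [this]
      rw [div_add_div _ _ (by positivity : (4*(v:ℝ)) ≠ 0) (by positivity : (2*(2*(v:ℝ))) ≠ 0),
        div_le_div_iff₀ (by positivity) (by positivity)]
      nlinarith [mul_nonneg (mul_nonneg hv0.le hv0.le) (sub_nonneg.2 hx2), sq_nonneg y, hv0]
    calc (Real.sqrt (2*Real.pi*(v:ℝ)))⁻¹ * Real.exp (-(y-0)^2/(2*(v:ℝ)))
        ≤ (Real.sqrt (2*Real.pi*(v:ℝ)))⁻¹ *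
          (Real.exp (-x^2/(4*(v:ℝ))) * Real.exp (-(y-0)^2/(2*((2*v : ℝ≥0):ℝ)))) :=
          mul_le_mul_of_nonneg_left hexp (by positivity)
      _ = Real.sqrt 2 * Real.exp (-x^2/(4*(v:ℝ))) *
          (((Real.sqrt 2)⁻¹ * (Real.sqrt (2*Real.pi*(v:ℝ)))⁻¹) *
            Real.exp (-(y-0)^2/(2*((2*v : ℝ≥0):ℝ)))) := by
          field_simp
  have key : ∀ y ∈ {y : ℝ | x ≤ |y|}, gaussianPDF 0 v y ≤
      ENNReal.ofReal (Real.sqrt 2 * Real.exp (-x^2/(4*v))) * gaussianPDF 0 (2*v) y := by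
    intro y hy
    rw [gaussianPDF, gaussianPDF, ← ENNReal.ofReal_mul (by positivity)]
    exact ENNReal.ofReal_le_ofReal (keyR y hy)
  calc ∫⁻ y in {y : ℝ | x ≤ |y|}, gaussianPDF 0 v y
      ≤ ∫⁻ y in {y : ℝ | x ≤ |y|},
          ENNReal.ofReal (Real.sqrt 2 * Real.exp (-x^2/(4*v))) * gaussianPDF 0 (2*v) y :=
        setLIntegral_mono ((measurable_gaussianPDF 0 (2*v)).const_mul _) key
    _ = ENNReal.ofReal (Real.sqrt 2 * Real.exp (-x^2/(4*v))) *
          ∫⁻ y in {y : ℝ | x ≤ |y|}, gaussianPDF 0 (2*v) y := by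
        rw [lintegral_const_mul _ (measurable_gaussianPDF 0 (2*v))]
    _ ≤ ENNReal.ofReal (Real.sqrt 2 * Real.exp (-x^2/(4*v))) *
          ∫⁻ y, gaussianPDF 0 (2*v) y := by
        gcongr
        exact Measure.restrict_le_self
    _ = ENNReal.ofReal (Real.sqrt 2 * Real.exp (-x^2/(4*v))) := by
        rw [lintegral_gaussianPDF_eq_one 0 h2v, mul_one]
    _ ≤ ENNReal.ofReal (2 * Real.exp (-x^2/(4*v))) := by
        apply ENNReal.ofReal_le_ofReal
        have : Real.sqrt 2 ≤ 2 := by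
          nlinarith [Real.sq_sqrt (by norm_num : (0:ℝ) ≤ 2), Real.sqrt_nonneg 2]
        nlinarith [Real.exp_pos (-x^2/(4*(v:ℝ)))]

lemma var_sum (H u m v h : ℝ) (hH : 2*H ≠ 0)
    (h1 : m - u = h) (h2 : v - m = h) (hh : 0 < h) :
    fbmCov H m m - (1/2)*(fbmCov H m u + fbmCov H u m + fbmCov H m v + fbmCov H v m)
      + (1/4)*(fbmCov H u u + fbmCov H v v + fbmCov H u v + fbmCov H v u)
    = (1 - (2:ℝ)^(2*H-2)) * h^(2*H) := by
  have e0 : ∀ x : ℝ, |x - x| ^ (2*H) = 0 := by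
    intro x; rw [sub_self, abs_zero, Real.zero_rpow hH]
  have emu : |m - u| ^ (2*H) = h^(2*H) := by rw [h1, abs_of_pos hh]
  have eum : |u - m| ^ (2*H) = h^(2*H) := by
    rw [abs_sub_comm, h1, abs_of_pos hh]
  have evm : |v - m| ^ (2*H) = h^(2*H) := by rw [h2, abs_of_pos hh]
  have emv : |m - v| ^ (2*H) = h^(2*H) := by
    rw [abs_sub_comm, h2, abs_of_pos hh]
  have evu : |v - u| ^ (2*H) = (2:ℝ)^(2*H) * h^(2*H) := by
    have : v - u = 2*h := by linarith
    rw [this, abs_of_pos (by linarith), Real.mul_rpow (by norm_num) hh.le]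
  have euv : |u - v| ^ (2*H) = (2:ℝ)^(2*H) * h^(2*H) := by
    rw [abs_sub_comm]; exact evu
  have e4 : (2:ℝ)^(2*H-2) = (2:ℝ)^(2*H) / 4 := by
    rw [Real.rpow_sub (by norm_num : (0:ℝ) < 2)]
    norm_num
  unfold fbmCov
  rw [e0 m, e0 u, e0 v, emu, eum, evm, emv, evu, euv, e4]
  ring

lemma tail_kj {Ω : Type*} [MeasurableSpace Ω] (P : Measure Ω) [IsProbabilityMeasure P]
    {H : ℝ} (hH2 : 1/2 < H) (hH1 : H < 1) {B : Ω → ℝ → ℝ} (hB : IsFBM P H B)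
    (k j : ℕ) (hk : 1 ≤ k) (hj : j < 2^(k-1)) {x : ℝ} (hx : 0 < x) :
    P {ω | x ≤ |B ω ((2*(j:ℝ)+1)/2^k) -
        (B ω ((j:ℝ)/2^(k-1)) + B ω (((j:ℝ)+1)/2^(k-1)))/2|} ≤
      ENNReal.ofReal (2 * Real.exp (-x^2/(4 * (2:ℝ)^(-(2*H)*(k:ℝ))))) := by
  have hp : (0:ℝ) < 2^k := by positivity
  have hp1 : (0:ℝ) < 2^(k-1) := by positivity
  have hkk : (2:ℝ)^k = 2^(k-1) * 2 := by
    rw [← pow_succ]; congr 1; omega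
  set m' : ℝ := (2*(j:ℝ)+1)/2^k with hm'
  set u' : ℝ := (j:ℝ)/2^(k-1) with hu'
  set v' : ℝ := ((j:ℝ)+1)/2^(k-1) with hv'
  set h : ℝ := ((2:ℝ)^k)⁻¹ with hhd
  have hh : 0 < h := by positivity
  have h1 : m' - u' = h := by
    rw [hm', hu', hhd]; field_simp; rw [hkk]; ring
  have h2 : v' - m' = h := by
    rw [hv', hm', hhd]; field_simp; rw [hkk]; ring
  have h2k : (2:ℕ)^k = 2*2^(k-1) := by
    conv_lhs => rw [show k = (k-1)+1 by omega]
    ring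
  have hm'mem : m' ∈ Set.Icc (0:ℝ) 1 := by
    constructor
    · rw [hm']; positivity
    · rw [hm', div_le_one hp]
      have : (2*j+1 : ℕ) ≤ 2^k := by omega
      have := (Nat.cast_le (α := ℝ)).mpr this
      push_cast at this; linarith
  have hu'mem : u' ∈ Set.Icc (0:ℝ) 1 := by
    constructor
    · rw [hu']; positivity
    · rw [hu', div_le_one hp1]
      have : (j : ℕ) ≤ 2^(k-1) := by omega
      have := (Nat.cast_le (α := ℝ)).mpr this
      push_cast at this; linarith
  have hv'mem : v' ∈ Set.Icc (0:ℝ) 1 := by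
    constructor
    · rw [hv']; positivity
    · rw [hv', div_le_one hp1]
      have : (j+1 : ℕ) ≤ 2^(k-1) := by omega
      have := (Nat.cast_le (α := ℝ)).mpr this
      push_cast at this; linarith
  set tv : Fin 3 → ℝ := ![m', u', v'] with htv
  set cv : Fin 3 → ℝ := ![1, -(1/2), -(1/2)] with hcv
  have hmem : ∀ i, tv i ∈ Set.Icc (0:ℝ) 1 := by
    intro i; fin_cases i <;> simpa [htv] using (by assumption)
  have hgauss := hB.gaussian 3 tv hmem cv
  have hH0 : (0:ℝ) < 2*H := by linarith
  have hc1 : (2:ℝ)^(2*H-2) < 1 :=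
    Real.rpow_lt_one_of_one_lt_of_neg (by norm_num) (by linarith)
  have hc0 : (0:ℝ) < (2:ℝ)^(2*H-2) := Real.rpow_pos_of_pos (by norm_num) _
  have hhp : (0:ℝ) < h^(2*H) := Real.rpow_pos_of_pos hh _
  have vpos : (0:ℝ) < (1 - (2:ℝ)^(2*H-2)) * h^(2*H) := by
    apply mul_pos (by linarith) hhp
  have hVsum : (∑ i, ∑ i2, cv i * cv i2 * fbmCov H (tv i) (tv i2)) =
      (1 - (2:ℝ)^(2*H-2)) * h^(2*H) := by
    have hvs := var_sum H u' m' v' h hH0.ne' h1 h2 hh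
    simp only [Fin.sum_univ_three, htv, hcv, Matrix.cons_val_zero, Matrix.cons_val_one,
      Matrix.head_cons, Matrix.cons_val_two, Matrix.tail_cons]
    linear_combination hvs
  have hfun : (fun ω => ∑ i, cv i * B ω (tv i)) =
      (fun ω => B ω m' - (B ω u' + B ω v')/2) := by
    funext ω
    simp only [Fin.sum_univ_three, htv, hcv, Matrix.cons_val_zero, Matrix.cons_val_one,
      Matrix.head_cons, Matrix.cons_val_two, Matrix.tail_cons]
    ring
  rw [hfun, hVsum] at hgauss
  have hZm : Measurable (fun ω => B ω m' - (B ω u' + B ω v')/2) :=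
    (hB.measurable m').sub (((hB.measurable u').add (hB.measurable v')).div_const 2)
  have hsetm : MeasurableSet {y : ℝ | x ≤ |y|} :=
    (isClosed_le continuous_const continuous_abs).measurableSet
  have happ : P {ω | x ≤ |B ω m' - (B ω u' + B ω v')/2|} =
      (Measure.map (fun ω => B ω m' - (B ω u' + B ω v')/2) P) {y | x ≤ |y|} := by
    rw [Measure.map_apply hZm hsetm]; rfl
  rw [happ, hgauss]
  have hvne : ((1 - (2:ℝ)^(2*H-2)) * h^(2*H)).toNNReal ≠ 0 :=
    (Real.toNNReal_pos.mpr vpos).ne'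
  refine le_trans (gaussian_tail _ hvne x hx) ?_
  apply ENNReal.ofReal_le_ofReal
  have hco : ((((1 - (2:ℝ)^(2*H-2)) * h^(2*H)).toNNReal : ℝ≥0) : ℝ) =
      (1 - (2:ℝ)^(2*H-2)) * h^(2*H) := Real.coe_toNNReal _ vpos.le
  rw [hco]
  have hh2H : h^(2*H) = (2:ℝ)^(-(2*H)*(k:ℝ)) := by
    rw [hhd, ← Real.rpow_natCast (2:ℝ) k, ← Real.rpow_neg (by norm_num),
      ← Real.rpow_mul (by norm_num)]
    congr 1; ring
  have hw : (0:ℝ) < (2:ℝ)^(-(2*H)*(k:ℝ)) := Real.rpow_pos_of_pos (by norm_num) _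
  have hvle : (1 - (2:ℝ)^(2*H-2)) * h^(2*H) ≤ (2:ℝ)^(-(2*H)*(k:ℝ)) := by
    rw [← hh2H]
    nlinarith
  have hdivle : x^2/(4*(2:ℝ)^(-(2*H)*(k:ℝ))) ≤
      x^2/(4*((1 - (2:ℝ)^(2*H-2)) * h^(2*H))) := by
    gcongr
  have hexp : Real.exp (-x^2/(4*((1 - (2:ℝ)^(2*H-2)) * h^(2*H)))) ≤
      Real.exp (-x^2/(4*(2:ℝ)^(-(2*H)*(k:ℝ)))) := by
    apply Real.exp_le_exp.mpr
    rw [neg_div, neg_div]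
    linarith
  linarith [Real.exp_pos (-x^2/(4*((1 - (2:ℝ)^(2*H-2)) * h^(2*H))))]

lemma level_bound {Ω : Type*} [MeasurableSpace Ω] (P : Measure Ω) [IsProbabilityMeasure P]
    {H : ℝ} (hH2 : 1/2 < H) (hH1 : H < 1) {B : Ω → ℝ → ℝ} (hB : IsFBM P H B)
    (k : ℕ) (hk : 1 ≤ k) {x : ℝ} (hx : 0 < x) :
    P {ω | x ≤ mdGap (B ω) k} ≤
      ((2^(k-1) : ℕ) : ℝ≥0∞) *
        ENNReal.ofReal (2 * Real.exp (-x^2/(4 * (2:ℝ)^(-(2*H)*(k:ℝ))))) := by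
  have hsub : {ω | x ≤ mdGap (B ω) k} ⊆
      ⋃ j ∈ Finset.range (2^(k-1)), {ω | x ≤ |B ω ((2*(j:ℝ)+1)/2^k) -
        (B ω ((j:ℝ)/2^(k-1)) + B ω (((j:ℝ)+1)/2^(k-1)))/2|} := by
    intro ω hω
    simp only [Set.mem_setOf_eq] at hω
    rw [mdGap, Finset.le_sup'_iff] at hω
    obtain ⟨j, hjmem, hjle⟩ := hω
    exact Set.mem_biUnion hjmem hjle
  calc P {ω | x ≤ mdGap (B ω) k} ≤
      P (⋃ j ∈ Finset.range (2^(k-1)), {ω | x ≤ |B ω ((2*(j:ℝ)+1)/2^k) -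
        (B ω ((j:ℝ)/2^(k-1)) + B ω (((j:ℝ)+1)/2^(k-1)))/2|}) := measure_mono hsub
    _ ≤ ∑ j ∈ Finset.range (2^(k-1)), P {ω | x ≤ |B ω ((2*(j:ℝ)+1)/2^k) -
        (B ω ((j:ℝ)/2^(k-1)) + B ω (((j:ℝ)+1)/2^(k-1)))/2|} :=
        measure_biUnion_finset_le _ _
    _ ≤ ∑ _j ∈ Finset.range (2^(k-1)),
        ENNReal.ofReal (2 * Real.exp (-x^2/(4 * (2:ℝ)^(-(2*H)*(k:ℝ))))) := by
        refine Finset.sum_le_sum fun j hj => ?_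
        exact tail_kj P hH2 hH1 hB k j hk (Finset.mem_range.mp hj) hx
    _ = ((2^(k-1) : ℕ) : ℝ≥0∞) *
        ENNReal.ofReal (2 * Real.exp (-x^2/(4 * (2:ℝ)^(-(2*H)*(k:ℝ))))) := by
        rw [Finset.sum_const, Finset.card_range, nsmul_eq_mul]

/-- Corollary (computable bound on the Hölder norm of fBM): almost surely
`‖B‖_α ≤ ‖B_N‖_α + ρ·2^{2−α}·2^{−(H−α−δ)(N+1)}/(1 − 2^{−(H−α−δ)})` where `N` is the
level of the last record-breaker. -/
theorem stmt17 {Ω : Type*} [MeasurableSpace Ω] (P : Measure Ω) [IsProbabilityMeasure P]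
    (H α δ ν ν' ρ : ℝ) (hH : H ∈ Set.Ioo (1/2 : ℝ) 1) (hα : α ∈ Set.Ioo (1/2 : ℝ) H)
    (hδ : δ ∈ Set.Ioo (0:ℝ) (H - α))
    (hν : 0 < ν) (hν' : 0 < ν') (hρ : ρ = 2 * (ν + ν'))
    (B : Ω → ℝ → ℝ) (hB : IsFBM P H B) :
    ∀ᵐ ω ∂P,
      holderNorm01 α (B ω) ≤
        holderNorm01 α (dyadicInterp (lastRB H δ ρ (B ω)) (B ω)) +
          ρ * (2:ℝ) ^ (2 - α) *
            (2:ℝ) ^ (-(H - α - δ) * ((lastRB H δ ρ (B ω) : ℝ) + 1)) /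
              (1 - (2:ℝ) ^ (-(H - α - δ))) := by
  obtain ⟨hH2, hH1⟩ := hH
  obtain ⟨hα2, hαH⟩ := hα
  obtain ⟨hδ0, hδH⟩ := hδ
  have hρ0 : 0 < ρ := by rw [hρ]; linarith
  set q : ℝ := (2:ℝ)^(2*δ) with hq
  have hq1 : 1 < q := by
    rw [hq]
    exact Real.one_lt_rpow_iff_of_pos (by norm_num) |>.mpr (Or.inl ⟨by norm_num, by linarith⟩)
  have hq0 : 0 < q := by linarith
  set c : ℝ := ρ^2/4 with hc
  have hc0 : 0 < c := by rw [hc]; positivity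
  set s : ℕ → Set Ω := fun n =>
    {ω | ρ * (2:ℝ)^(-(H-δ)*((n+1:ℕ):ℝ)) ≤ mdGap (B ω) (n+1)} with hs
  set g : ℕ → ℝ := fun n => (2:ℝ)^n * (2 * Real.exp (-(c * q^(n+1)))) with hg
  have hgpos : ∀ n, 0 < g n := fun n => by
    rw [hg]; positivity
  -- Step A : termwise bound
  have hA : ∀ n : ℕ, P (s n) ≤ ENNReal.ofReal (g n) := by
    intro n
    have hx : (0:ℝ) < ρ * (2:ℝ)^(-(H-δ)*((n+1:ℕ):ℝ)) := by positivity
    have hlb := level_bound P hH2 hH1 hB (n+1) (by omega) hx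
    have hcard : ((n+1) - 1 : ℕ) = n := by omega
    rw [hcard] at hlb
    refine le_trans hlb ?_
    have hqpow : q^(n+1) = (2:ℝ)^(2*δ*(((n+1:ℕ)):ℝ)) := by
      rw [hq, ← Real.rpow_natCast ((2:ℝ)^(2*δ)) (n+1), ← Real.rpow_mul (by norm_num)]
    have hmerge : (2:ℝ)^(2*δ*(((n+1:ℕ)):ℝ)) * (2:ℝ)^(-(2*H)*(((n+1:ℕ)):ℝ)) =
        (2:ℝ)^(2*(-(H-δ)*(((n+1:ℕ)):ℝ))) := by
      rw [← Real.rpow_add (by norm_num : (0:ℝ) < 2)]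
      congr 1; ring
    have hxsq : (ρ * (2:ℝ)^(-(H-δ)*((n+1:ℕ):ℝ)))^2 =
        ρ^2 * (2:ℝ)^(2*(-(H-δ)*(((n+1:ℕ)):ℝ))) := by
      rw [mul_pow]
      congr 1
      rw [pow_two, ← Real.rpow_add (by norm_num : (0:ℝ) < 2)]
      congr 1; ring
    have hwpos : (0:ℝ) < (2:ℝ)^(-(2*H)*(((n+1:ℕ)):ℝ)) :=
      Real.rpow_pos_of_pos (by norm_num) _
    have hkey : (ρ * (2:ℝ)^(-(H-δ)*((n+1:ℕ):ℝ)))^2 /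
        (4 * (2:ℝ)^(-(2*H)*(((n+1:ℕ)):ℝ))) = c * q^(n+1) := by
      rw [hxsq, hqpow, div_eq_iff (by positivity), hc]
      rw [← hmerge]
      ring
    have hof : ((2^n : ℕ) : ℝ≥0∞) = ENNReal.ofReal ((2:ℝ)^n) := by
      rw [← ENNReal.ofReal_natCast (2^n)]
      norm_num
    rw [hof, ← ENNReal.ofReal_mul (by positivity)]
    apply ENNReal.ofReal_le_ofReal
    rw [neg_div, hkey, hg]
  -- Step B : summability of g
  have hgsum : Summable g := by
    refine summable_of_ratio_norm_eventually_le (r := 1/2) (by norm_num) ?_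
    have hT : Tendsto (fun n : ℕ => c*(q-1) * q^(n+1)) atTop atTop := by
      have h1 : Tendsto (fun n : ℕ => q^(n+1)) atTop atTop :=
        (tendsto_pow_atTop_atTop_of_one_lt hq1).comp (tendsto_add_atTop_nat 1)
      exact h1.const_mul_atTop (by nlinarith)
    filter_upwards [hT.eventually_ge_atTop (Real.log 4)] with n hn
    rw [Real.norm_eq_abs, Real.norm_eq_abs, abs_of_pos (hgpos _), abs_of_pos (hgpos _)]
    have hdecomp : g (n+1) = g n * (2 * Real.exp (-(c * q^(n+1) * (q-1)))) := by
      rw [hg]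
      simp only []
      have e : -(c * q^(n+1+1)) = -(c*q^(n+1)) + -(c*q^(n+1)*(q-1)) := by
        rw [pow_succ q (n+1)]; ring
      rw [e, Real.exp_add, pow_succ (2:ℝ) n]
      ring
    have hsm : Real.exp (-(c * q^(n+1) * (q-1))) ≤ 1/4 := by
      have h4 : Real.exp (-(Real.log 4)) = 1/4 := by
        rw [Real.exp_neg, Real.exp_log (by norm_num : (0:ℝ) < 4)]
        norm_num
      rw [← h4]
      apply Real.exp_le_exp.mpr
      have : Real.log 4 ≤ c * (q-1) * q^(n+1) := hn
      nlinarith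
    rw [hdecomp]
    have : g n * (2 * Real.exp (-(c * q^(n+1) * (q-1)))) ≤ g n * (2 * (1/4)) := by
      refine mul_le_mul_of_nonneg_left ?_ (hgpos n).le
      linarith
    linarith [this]
  -- Step C : Borel-Cantelli
  have hne : (∑' n, P (s n)) ≠ ⊤ := by
    have h1 : (∑' n, P (s n)) ≤ ∑' n, ENNReal.ofReal (g n) := ENNReal.tsum_le_tsum hA
    have h2 : (∑' n, ENNReal.ofReal (g n)) = ENNReal.ofReal (∑' n, g n) :=
      (ENNReal.ofReal_tsum_of_nonneg (fun n => (hgpos n).le) hgsum).symm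
    rw [h2] at h1
    exact ne_top_of_le_ne_top ENNReal.ofReal_ne_top h1
  filter_upwards [MeasureTheory.ae_eventually_notMem hne] with ω hω
  obtain ⟨K, hK⟩ := eventually_atTop.mp hω
  -- Step D : the record-breaker set is bounded
  have hbdd : BddAbove {k : ℕ | 1 ≤ k ∧ ρ * (2:ℝ)^(-(H-δ)*(k:ℝ)) ≤ mdGap (B ω) k} := by
    refine ⟨K+1, ?_⟩
    rintro k ⟨hk1, hkle⟩
    by_contra hcon
    push_neg at hcon
    have hkK : K ≤ k - 1 := by omega
    have := hK (k-1) hkK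
    rw [hs] at this
    simp only [Set.mem_setOf_eq] at this
    have hkk : (k-1) + 1 = k := by omega
    rw [hkk] at this
    exact this hkle
  have hgap : ∀ k : ℕ, lastRB H δ ρ (B ω) + 1 ≤ k →
      mdGap (B ω) k ≤ ρ * (2:ℝ)^(-(H-δ)*(k:ℝ)) := by
    intro k hkN
    by_contra hcon
    push_neg at hcon
    have hmem : k ∈ {k : ℕ | 1 ≤ k ∧ ρ * (2:ℝ)^(-(H-δ)*(k:ℝ)) ≤ mdGap (B ω) k} :=
      ⟨by omega, hcon.le⟩
    have := le_csSup hbdd hmem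
    rw [lastRB] at hkN
    omega
  exact holder_det H α δ ρ (by linarith) (by linarith) (by linarith) hδ0 hρ0
    (B ω) (hB.continuousOn ω) hgap

end
end
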